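/- Turnbull's interval lemma: Let (L_i, R_i], i = 1,...,n, be interval-censoring observation intervals, and let s_0 < s_1 < ... < s_m be the ordered distinct elements of {0} ∪ {L_i} ∪ {R_i}. Any probability vector p = (p_1,...,p_m) with p_j interpreted as mass on (s_{j−1}, s_j] maximizing the likelihood L(p) = ∏_{i=1}^n (∑_{j: (s_{j−1},s_j] ⊆ (L_i,R_i]} p_j) can place positive mass p_j > 0 only on intervals (s_{j−1}, s_j] with s_{j−1} ∈ {L_1,...,L_n} and s_j ∈ {R_1,...,R_n}. -/

import Mathlib

/-- Turnbull's interval lemma: any maximizer of the interval-censoring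
likelihood over the probability simplex places mass only on Turnbull
intervals, i.e. intervals `(s_{j−1}, s_j]` with `s_{j−1}` a left endpoint
`Lᵢ` and `s_j` a right endpoint `Rₖ` of some observations. -/
theorem turnbull_intervals
    (n m : ℕ) (L R : Fin n → ℝ)
    (hLR : ∀ i, 0 ≤ L i ∧ L i < R i)
    (s : Fin (m + 1) → ℝ)
    (hs_mono : StrictMono s)
    (hs_range : Set.range s = {0} ∪ Set.range L ∪ Set.range R)
    (Lik : (Fin m → ℝ) → ℝ)
    (hLik : ∀ p, Lik p = ∏ i : Fin n,
      ∑ j ∈ Finset.univ.filter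
        (fun j : Fin m => L i ≤ s j.castSucc ∧ s j.succ ≤ R i), p j)
    (p : Fin m → ℝ)
    (hp_nonneg : ∀ j, 0 ≤ p j) (hp_sum : ∑ j, p j = 1)
    (hp_max : ∀ q : Fin m → ℝ, (∀ j, 0 ≤ q j) → (∑ j, q j = 1) →
      Lik q ≤ Lik p) :
    ∀ j : Fin m,
      ¬ (s j.castSucc ∈ Set.range L ∧ s j.succ ∈ Set.range R) → p j = 0 := by
  classical
  set F : Fin n → Finset (Fin m) :=
    fun i => Finset.univ.filter
      (fun j : Fin m => L i ≤ s j.castSucc ∧ s j.succ ≤ R i) with hF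
  have hmemF : ∀ (i : Fin n) (k : Fin m),
      k ∈ F i ↔ (L i ≤ s k.castSucc ∧ s k.succ ≤ R i) := by
    intro i k; simp [hF]
  -- basic range facts
  have hLmem : ∀ i, L i ∈ Set.range s := by
    intro i
    rw [hs_range]
    exact Or.inl (Or.inr ⟨i, rfl⟩)
  have hRmem : ∀ i, R i ∈ Set.range s := by
    intro i
    rw [hs_range]
    exact Or.inr ⟨i, rfl⟩
  -- s 0 = 0
  have hs0 : s 0 = 0 := by
    have h0 : (0 : ℝ) ∈ Set.range s := by
      rw [hs_range]; exact Or.inl (Or.inl rfl)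
    obtain ⟨c, hc⟩ := h0
    have h1 : s 0 ≤ 0 := hc ▸ hs_mono.monotone (Fin.zero_le c)
    have h2 : s 0 ∈ ({0} : Set ℝ) ∪ Set.range L ∪ Set.range R := by
      rw [← hs_range]; exact ⟨0, rfl⟩
    have h3 : (0 : ℝ) ≤ s 0 := by
      rcases h2 with (h | ⟨i, hi⟩) | ⟨i, hi⟩
      · exact le_of_eq h.symm
      · exact hi ▸ (hLR i).1
      · exact hi ▸ le_of_lt (lt_of_le_of_lt (hLR i).1 (hLR i).2)
    linarith
  -- every observation contains some interval
  have hF_ne : ∀ i, ∃ k, k ∈ F i := by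
    intro i
    obtain ⟨a, ha⟩ := hLmem i
    obtain ⟨b, hb⟩ := hRmem i
    have hab : a < b := hs_mono.lt_iff_lt.mp (by rw [ha, hb]; exact (hLR i).2)
    have hbm : (b : ℕ) ≤ m := Nat.lt_succ_iff.mp b.isLt
    have ham : (a : ℕ) < m := lt_of_lt_of_le hab hbm
    refine ⟨⟨a, ham⟩, (hmemF i _).mpr ⟨?_, ?_⟩⟩
    · have : (⟨(a : ℕ), ham⟩ : Fin m).castSucc = a := by
        apply Fin.ext; simp
      rw [this, ha]
    · have : ((⟨(a : ℕ), ham⟩ : Fin m).succ : ℕ) ≤ (b : ℕ) := by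
        simpa using hab
      calc s (⟨(a : ℕ), ham⟩ : Fin m).succ ≤ s b := hs_mono.monotone this
        _ = R i := hb
  -- each factor of the likelihood at p is positive
  have hfac_pos : ∀ i, 0 < ∑ k ∈ F i, p k := by
    intro i
    rcases Nat.eq_zero_or_pos m with hm | hm
    · exact absurd (hF_ne i) (by rintro ⟨k, -⟩; exact absurd k.isLt (by omega))
    have hLu : 0 < Lik (fun _ => (m : ℝ)⁻¹) := by
      rw [hLik]
      apply Finset.prod_pos
      intro i' _
      obtain ⟨k, hk⟩ := hF_ne i'
      have : (0:ℝ) < (F i').card * (m : ℝ)⁻¹ := by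
        apply mul_pos
        · exact_mod_cast Finset.card_pos.mpr ⟨k, hk⟩
        · positivity
      calc (0:ℝ) < (F i').card * (m : ℝ)⁻¹ := this
        _ = ∑ _k ∈ F i', (m : ℝ)⁻¹ := by rw [Finset.sum_const, nsmul_eq_mul]
    have hsum_u : ∑ _k : Fin m, (m : ℝ)⁻¹ = 1 := by
      rw [Finset.sum_const, nsmul_eq_mul]
      simp only [Finset.card_univ, Fintype.card_fin]
      field_simp
    have hLp : 0 < Lik p :=
      lt_of_lt_of_le hLu (hp_max _ (fun _ => by positivity) hsum_u)
    by_contra hle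
    push_neg at hle
    have h0 : ∑ k ∈ F i, p k = 0 :=
      le_antisymm hle (Finset.sum_nonneg fun k _ => hp_nonneg k)
    have : Lik p = 0 := by
      rw [hLik]
      exact Finset.prod_eq_zero (Finset.mem_univ i) h0
    linarith
  intro j hj
  by_contra hpj
  have hpj : 0 < p j := lt_of_le_of_ne (hp_nonneg j) (Ne.symm hpj)
  -- key moving-mass lemma
  have key : ∀ j' : Fin m, j' ≠ j → (∀ i, j ∈ F i → j' ∈ F i) →
      (∃ i, j' ∈ F i ∧ j ∉ F i) → False := by
    intro j' hjj' hmove ⟨i₀, hi₀j', hi₀j⟩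
    set q : Fin m → ℝ := fun k =>
      p k + (if k = j' then p j else 0) - (if k = j then p j else 0) with hq
    have hq_nonneg : ∀ k, 0 ≤ q k := by
      intro k
      rcases eq_or_ne k j' with h | h
      · subst h
        have h1 := hp_nonneg k
        simp [hq, hjj']
        linarith
      · rcases eq_or_ne k j with h2 | h2
        · subst h2; simp [hq, h]
        · simp [hq, h, h2]; exact hp_nonneg k
    have hq_sum : ∑ k, q k = 1 := by
      simp only [hq, Finset.sum_sub_distrib, Finset.sum_add_distrib,
        Finset.sum_ite_eq', Finset.mem_univ, if_true, hp_sum]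
      ring
    have hfac_q : ∀ i, ∑ k ∈ F i, q k =
        (∑ k ∈ F i, p k) + (if j' ∈ F i then p j else 0)
          - (if j ∈ F i then p j else 0) := by
      intro i
      simp only [hq, Finset.sum_sub_distrib, Finset.sum_add_distrib,
        Finset.sum_ite_eq']
    have hlt : Lik p < Lik q := by
      rw [hLik p, hLik q]
      apply Finset.prod_lt_prod
      · intro i _; exact hfac_pos i
      · intro i _
        rw [hfac_q i]
        by_cases h1 : j ∈ F i
        · have h2 : j' ∈ F i := hmove i h1
          simp [h1, h2]
          exact le_refl _
        · simp only [h1, if_false, sub_zero]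
          split <;> [linarith [hpj.le]; linarith]
      · refine ⟨i₀, Finset.mem_univ i₀, ?_⟩
        rw [hfac_q i₀]
        simp [hi₀j', hi₀j]
        exact lt_add_of_pos_right _ hpj
    exact absurd (hp_max q hq_nonneg hq_sum) (not_le.mpr hlt)
  by_cases hex : ∃ i, j ∈ F i
  · obtain ⟨iw, hiw⟩ := hex
    obtain ⟨hiwL, hiwR⟩ := (hmemF iw j).mp hiw
    rw [not_and_or] at hj
    rcases hj with hj | hj
    · -- s j.castSucc is not a left endpoint: move mass left
      obtain ⟨a, ha⟩ := hLmem iw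
      have haj : a < j.castSucc := by
        apply hs_mono.lt_iff_lt.mp
        rw [ha]
        cases' lt_or_eq_of_le hiwL with h h
        · exact h
        · exact absurd ⟨iw, h⟩ hj
      have hj1 : 1 ≤ (j : ℕ) := by
        have := Fin.lt_def.mp haj
        simp at this
        omega
      set j' : Fin m := ⟨(j : ℕ) - 1, by omega⟩ with hj'
      have hj'succ : j'.succ = j.castSucc := by
        apply Fin.ext; simp [hj']; omega
      have hj'j : j' ≠ j := by
        intro h
        have := congrArg (Fin.val) h
        simp [hj'] at this
        omega
      apply key j' hj'j
      · intro i hi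
        obtain ⟨hiL, hiR⟩ := (hmemF i j).mp hi
        obtain ⟨c, hc⟩ := hLmem i
        have hcj : c < j.castSucc := by
          apply hs_mono.lt_iff_lt.mp
          rw [hc]
          cases' lt_or_eq_of_le hiL with h h
          · exact h
          · exact absurd ⟨i, h⟩ hj
        rw [hmemF]
        constructor
        · rw [← hc]
          apply hs_mono.monotone
          rw [Fin.le_def]
          have := Fin.lt_def.mp hcj
          simp [hj'] at this ⊢
          omega
        · rw [hj'succ]
          exact le_trans (hs_mono (Fin.castSucc_lt_succ : j.castSucc < j.succ)).le hiR
      · -- s j.castSucc is a right endpoint R k ; obs k contains j' not j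
        have hmem2 : s j.castSucc ∈ ({0} : Set ℝ) ∪ Set.range L ∪ Set.range R := by
          rw [← hs_range]; exact ⟨_, rfl⟩
        have hpos : 0 < s j.castSucc := by
          rw [← hs0]
          apply hs_mono
          rw [Fin.lt_def]
          simp; omega
        obtain ⟨k, hk⟩ : s j.castSucc ∈ Set.range R := by
          rcases hmem2 with (h | h) | h
          · simp at h; linarith
          · exact absurd h hj
          · exact h
        refine ⟨k, ?_, ?_⟩
        · rw [hmemF]
          constructor
          · obtain ⟨c, hc⟩ := hLmem k
            have hck : c < j.castSucc := by
              apply hs_mono.lt_iff_lt.mp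
              rw [hc, ← hk]
              exact (hLR k).2
            rw [← hc]
            apply hs_mono.monotone
            rw [Fin.le_def]
            have := Fin.lt_def.mp hck
            simp [hj'] at this ⊢
            omega
          · rw [hj'succ, ← hk]
        · rw [hmemF]
          rintro ⟨-, h2⟩
          rw [hk] at h2
          exact absurd h2 (not_le.mpr (hs_mono (Fin.castSucc_lt_succ : j.castSucc < j.succ)))
    · -- s j.succ is not a right endpoint: move mass right
      obtain ⟨b, hb⟩ := hRmem iw
      have hjb : j.succ < b := by
        apply hs_mono.lt_iff_lt.mp
        rw [hb]
        cases' lt_or_eq_of_le hiwR with h h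
        · exact h
        · exact absurd ⟨iw, h.symm⟩ hj
      have hjm : (j : ℕ) + 1 < m := by
        have h1 := Fin.lt_def.mp hjb
        have h2 := Nat.lt_succ_iff.mp b.isLt
        simp at h1
        omega
      set j' : Fin m := ⟨(j : ℕ) + 1, hjm⟩ with hj'
      have hj'cast : j'.castSucc = j.succ := by
        apply Fin.ext; simp [hj']
      have hj'j : j' ≠ j := by
        intro h
        have := congrArg (Fin.val) h
        simp [hj'] at this
      apply key j' hj'j
      · intro i hi
        obtain ⟨hiL, hiR⟩ := (hmemF i j).mp hi
        obtain ⟨c, hc⟩ := hRmem i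
        have hcj : j.succ < c := by
          apply hs_mono.lt_iff_lt.mp
          rw [hc]
          cases' lt_or_eq_of_le hiR with h h
          · exact h
          · exact absurd ⟨i, h.symm⟩ hj
        rw [hmemF]
        constructor
        · rw [hj'cast]
          calc L i ≤ s j.castSucc := hiL
            _ ≤ s j.succ := (hs_mono (Fin.castSucc_lt_succ : j.castSucc < j.succ)).le
        · rw [← hc]
          apply hs_mono.monotone
          rw [Fin.le_def]
          have := Fin.lt_def.mp hcj
          simp [hj'] at this ⊢
          omega
      · -- s j.succ is a left endpoint L k ; obs k contains j' not j
        have hmem2 : s j.succ ∈ ({0} : Set ℝ) ∪ Set.range L ∪ Set.range R := by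
          rw [← hs_range]; exact ⟨_, rfl⟩
        have hpos : 0 < s j.succ := by
          rw [← hs0]
          apply hs_mono
          rw [Fin.lt_def]
          simp
        obtain ⟨k, hk⟩ : s j.succ ∈ Set.range L := by
          rcases hmem2 with (h | h) | h
          · simp at h; linarith
          · exact h
          · exact absurd h hj
        refine ⟨k, ?_, ?_⟩
        · rw [hmemF]
          constructor
          · rw [hj'cast, ← hk]
          · obtain ⟨c, hc⟩ := hRmem k
            have hck : j'.castSucc < c := by
              apply hs_mono.lt_iff_lt.mp
              rw [hc, hj'cast, ← hk]
              exact (hLR k).2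
            rw [← hc]
            apply hs_mono.monotone
            rw [Fin.le_def]
            have := Fin.lt_def.mp hck
            simp [hj'] at this ⊢
            omega
        · rw [hmemF]
          rintro ⟨h1, -⟩
          rw [hk] at h1
          exact absurd h1 (not_le.mpr (hs_mono (Fin.castSucc_lt_succ : j.castSucc < j.succ)))
  · -- no observation contains interval j
    push_neg at hex
    rcases Nat.eq_zero_or_pos n with hn | hn
    · -- n = 0 forces m = 0, contradicting j : Fin m
      subst hn
      have h01 : s 0 < s ⟨m, Nat.lt_succ_self m⟩ := by
        apply hs_mono
        rw [Fin.lt_def]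
        simpa using j.pos
      have hall : ∀ c : Fin (m+1), s c = 0 := by
        intro c
        have : s c ∈ ({0} : Set ℝ) ∪ Set.range L ∪ Set.range R := by
          rw [← hs_range]; exact ⟨_, rfl⟩
        rcases this with (h | ⟨i, -⟩) | ⟨i, -⟩
        · simpa using h
        · exact absurd i.isLt (by omega)
        · exact absurd i.isLt (by omega)
      rw [hall, hall] at h01
      exact lt_irrefl _ h01
    · obtain ⟨j₀, hj₀⟩ := hF_ne ⟨0, hn⟩
      have hj₀j : j₀ ≠ j := by
        intro h; exact hex _ (h ▸ hj₀)
      exact key j₀ hj₀j (fun i hi => absurd hi (hex i)) ⟨⟨0, hn⟩, hj₀, hex _⟩
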